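/- Let P_r and Q_r be two projectors on ℝ^d with equal kernels, Ker(P_r) = Ker(Q_r). Then the σ-algebras they generate coincide: σ(P_r) = σ(Q_r), i.e., the comap of the Borel σ-algebra of ℝ^d under P_r equals the comap of the Borel σ-algebra under Q_r. -/
import Mathlib


open Matrix

theorem aux_comap_le (d : ℕ) (A B : Matrix (Fin d) (Fin d) ℝ)
    (hA : A * A = A)
    (hk : LinearMap.ker A.mulVecLin = LinearMap.ker B.mulVecLin) :
    MeasurableSpace.comap (fun x => B.mulVec x) (borel (Fin d → ℝ)) ≤
      MeasurableSpace.comap (fun x => A.mulVec x) (borel (Fin d → ℝ)) := by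
  have hcomp : (fun x => B.mulVec x) = (fun y => B.mulVec y) ∘ (fun x => A.mulVec x) := by
    funext x
    have hx : x - A.mulVec x ∈ LinearMap.ker A.mulVecLin := by
      simp [LinearMap.mem_ker, Matrix.mulVecLin_apply, Matrix.mulVec_sub,
        Matrix.mulVec_mulVec, hA]
    rw [hk] at hx
    have hx' : B.mulVec (x - A.mulVec x) = 0 := hx
    rw [Matrix.mulVec_sub] at hx'
    have := sub_eq_zero.mp hx'
    simpa using this
  rw [hcomp, ← MeasurableSpace.comap_comp]
  refine MeasurableSpace.comap_mono ?_
  have hB : Measurable (fun y : Fin d → ℝ => B.mulVec y) := by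
    have : Continuous (fun y : Fin d → ℝ => B.mulVecLin y) :=
      B.mulVecLin.continuous_of_finiteDimensional
    simpa [Matrix.mulVecLin_apply] using this.measurable
  have hborel : borel (Fin d → ℝ) = (inferInstance : MeasurableSpace (Fin d → ℝ)) :=
    BorelSpace.measurable_eq.symm
  rw [hborel]
  exact hB.comap_le

/-- Two projectors on ℝ^d with equal kernels generate the same σ-algebra: the comap of
the Borel σ-algebra of ℝ^d under `P` equals the comap of the Borel σ-algebra under `Q`. -/
theorem sigma_algebra_eq_of_ker_eq (d : ℕ)
    (P Q : Matrix (Fin d) (Fin d) ℝ)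
    (hP : P * P = P) (hQ : Q * Q = Q)
    (hker : LinearMap.ker P.mulVecLin = LinearMap.ker Q.mulVecLin) :
    MeasurableSpace.comap (fun x => P.mulVec x) (borel (Fin d → ℝ)) =
      MeasurableSpace.comap (fun x => Q.mulVec x) (borel (Fin d → ℝ)) := by
  exact le_antisymm (aux_comap_le d Q P hQ hker.symm) (aux_comap_le d P Q hP hker)
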